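/- Let Z ∈ ℝ^{d_in × n} be a fixed matrix and a > 0. For every ε > 0 there exists a finite set U of matrices in ℝ^{d_out × n} with cardinality |U| ≤ (1 + 2a‖Z‖_F/ε)^{d_in · d_out} such that for every A ∈ ℝ^{d_out × d_in} with ‖A‖_F ≤ a there is some u ∈ U with ‖AZ − u‖_F ≤ ε. -/

import Mathlib

noncomputable def frobNorm {α β : Type*} [Fintype α] [Fintype β] (M : Matrix α β ℝ) : ℝ :=
  Real.sqrt (∑ i, ∑ j, (M i j) ^ 2)


open Metric MeasureTheory Finset
open scoped ENNReal

variable {ι : Type*} [Fintype ι]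

lemma sep_card_bound (a δ : ℝ) (ha : 0 ≤ a) (hδ : 0 < δ)
    (S : Finset (EuclideanSpace ℝ ι)) (hsub : ↑S ⊆ closedBall (0 : EuclideanSpace ℝ ι) a)
    (hsep : ∀ s ∈ S, ∀ t ∈ S, s ≠ t → δ < dist s t) :
    (S.card : ℝ) ≤ (1 + 2 * a / δ) ^ (Fintype.card ι) := by
  have hbase : (1 : ℝ) ≤ 1 + 2 * a / δ := by
    have : 0 ≤ 2 * a / δ := by positivity
    linarith
  rcases isEmpty_or_nonempty ι with hι | hι
  · have h1 : S.card ≤ 1 := Finset.card_le_one.mpr fun x _ y _ => Subsingleton.elim x y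
    calc (S.card : ℝ) ≤ 1 := by exact_mod_cast h1
      _ ≤ _ := one_le_pow₀ hbase
  · haveI : Nontrivial (EuclideanSpace ℝ ι) := inferInstance
    set μ : Measure (EuclideanSpace ℝ ι) := volume with hμ
    have hdisj : (S : Set (EuclideanSpace ℝ ι)).Pairwise
        (Function.onFun Disjoint fun s => ball s (δ / 2)) := by
      intro s hs t ht hst
      exact ball_disjoint_ball (by
        have := hsep s hs t ht hst
        linarith)
    have hsub2 : ∀ s ∈ S, ball s (δ / 2) ⊆ ball (0 : EuclideanSpace ℝ ι) (a + δ / 2) := by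
      intro s hs z hz
      have h1 : dist z s < δ / 2 := mem_ball.mp hz
      have h2 : dist s (0 : EuclideanSpace ℝ ι) ≤ a := mem_closedBall.mp (hsub hs)
      have h3 := dist_triangle z s (0 : EuclideanSpace ℝ ι)
      simp only [dist_zero_right] at h2 h3
      exact mem_ball.mpr (by rw [dist_zero_right]; linarith)
    have hmeas : μ (⋃ s ∈ S, ball s (δ / 2)) = ∑ s ∈ S, μ (ball s (δ / 2)) :=
      measure_biUnion_finset hdisj fun s _ => measurableSet_ball
    have hballval : ∀ s : EuclideanSpace ℝ ι,
        μ (ball s (δ / 2)) = ENNReal.ofReal ((δ / 2) ^ (Fintype.card ι)) * μ (ball 0 1) := by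
      intro s
      rw [Measure.addHaar_ball μ s (by linarith : (0:ℝ) ≤ δ / 2), finrank_euclideanSpace]
    have hbig : μ (ball (0 : EuclideanSpace ℝ ι) (a + δ / 2))
        = ENNReal.ofReal ((a + δ / 2) ^ (Fintype.card ι)) * μ (ball 0 1) := by
      rw [Measure.addHaar_ball μ _ (by linarith : (0:ℝ) ≤ a + δ / 2), finrank_euclideanSpace]
    have hB0 : μ (ball (0 : EuclideanSpace ℝ ι) 1) ≠ 0 :=
      (measure_ball_pos μ _ one_pos).ne'
    have hBtop : μ (ball (0 : EuclideanSpace ℝ ι) 1) ≠ ⊤ := measure_ball_lt_top.ne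
    have key : (S.card : ℝ≥0∞) * ENNReal.ofReal ((δ / 2) ^ (Fintype.card ι))
        ≤ ENNReal.ofReal ((a + δ / 2) ^ (Fintype.card ι)) := by
      rw [← ENNReal.mul_le_mul_iff_left hB0 hBtop, mul_assoc, ← hbig]
      calc (S.card : ℝ≥0∞) * (ENNReal.ofReal ((δ / 2) ^ (Fintype.card ι)) * μ (ball 0 1))
          = ∑ s ∈ S, μ (ball s (δ / 2)) := by
            rw [Finset.sum_congr rfl fun s _ => hballval s, Finset.sum_const, nsmul_eq_mul]
        _ = μ (⋃ s ∈ S, ball s (δ / 2)) := hmeas.symm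
        _ ≤ μ (ball (0 : EuclideanSpace ℝ ι) (a + δ / 2)) :=
            measure_mono (Set.iUnion₂_subset hsub2)
    have hreal : (S.card : ℝ) * (δ / 2) ^ (Fintype.card ι)
        ≤ (a + δ / 2) ^ (Fintype.card ι) := by
      have := key
      rw [← ENNReal.ofReal_natCast, ← ENNReal.ofReal_mul (by positivity)] at this
      exact (ENNReal.ofReal_le_ofReal_iff (by positivity)).mp this
    have hpow : (0:ℝ) < (δ / 2) ^ (Fintype.card ι) := by positivity
    rw [← le_div_iff₀ hpow] at hreal
    calc (S.card : ℝ) ≤ (a + δ / 2) ^ (Fintype.card ι) / (δ / 2) ^ (Fintype.card ι) := hreal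
      _ = ((a + δ / 2) / (δ / 2)) ^ (Fintype.card ι) := by rw [← div_pow]
      _ = (1 + 2 * a / δ) ^ (Fintype.card ι) := by
          congr 1
          field_simp
          ring

lemma exists_net (a δ : ℝ) (ha : 0 ≤ a) (hδ : 0 < δ) :
    ∃ S : Finset (EuclideanSpace ℝ ι),
      (S.card : ℝ) ≤ (1 + 2 * a / δ) ^ (Fintype.card ι) ∧
      ∀ x ∈ closedBall (0 : EuclideanSpace ℝ ι) a, ∃ s ∈ S, dist x s ≤ δ := by
  classical
  set Sep : Finset (EuclideanSpace ℝ ι) → Prop := fun S =>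
    ↑S ⊆ closedBall (0 : EuclideanSpace ℝ ι) a ∧
      ∀ s ∈ S, ∀ t ∈ S, s ≠ t → δ < dist s t with hSep
  set P : Set ℕ := {m | ∃ S, Sep S ∧ S.card = m} with hP
  have h0 : 0 ∈ P := ⟨∅, ⟨by simp, by simp⟩, rfl⟩
  have hbdd : BddAbove P := by
    refine ⟨Nat.floor ((1 + 2 * a / δ) ^ (Fintype.card ι)), fun m hm => ?_⟩
    obtain ⟨S, hS, rfl⟩ := hm
    exact Nat.le_floor (sep_card_bound a δ ha hδ S hS.1 hS.2)
  obtain ⟨S, hS, hcard⟩ := Nat.sSup_mem ⟨0, h0⟩ hbdd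
  refine ⟨S, sep_card_bound a δ ha hδ S hS.1 hS.2, fun x hx => ?_⟩
  by_contra hcon
  push_neg at hcon
  have hxS : x ∉ S := by
    intro h
    have := hcon x h
    rw [dist_self] at this
    linarith
  have hSep' : Sep (insert x S) := by
    constructor
    · rw [Finset.coe_insert]
      exact Set.insert_subset hx hS.1
    · intro s hs t ht hst
      simp only [Finset.mem_insert] at hs ht
      rcases hs with hs | hs <;> rcases ht with ht | ht
      · exact absurd (hs.trans ht.symm) hst
      · subst hs; exact hcon t ht
      · subst ht; rw [dist_comm]; exact hcon s hs
      · exact hS.2 s hs t ht hst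
  have : S.card + 1 ∈ P := ⟨insert x S, hSep', by rw [Finset.card_insert_of_notMem hxS]⟩
  have := le_csSup hbdd this
  omega

section frob
attribute [local instance] Matrix.frobeniusSeminormedAddCommGroup Matrix.frobeniusNormedRing

lemma frobNorm_eq_norm {α β : Type*} [Fintype α] [Fintype β] (M : Matrix α β ℝ) :
    frobNorm M = ‖M‖ := by
  rw [Matrix.frobenius_norm_def, frobNorm, Real.sqrt_eq_rpow]
  congr 1
  refine Finset.sum_congr rfl fun i _ => Finset.sum_congr rfl fun j _ => ?_
  rw [Real.norm_eq_abs, show (2:ℝ) = ((2:ℕ):ℝ) by norm_num, Real.rpow_natCast, sq_abs]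

lemma frobNorm_nonneg {α β : Type*} [Fintype α] [Fintype β] (M : Matrix α β ℝ) :
    0 ≤ frobNorm M := Real.sqrt_nonneg _

lemma frobNorm_mul_le {α β γ : Type*} [Fintype α] [Fintype β] [Fintype γ]
    (A : Matrix α β ℝ) (B : Matrix β γ ℝ) :
    frobNorm (A * B) ≤ frobNorm A * frobNorm B := by
  rw [frobNorm_eq_norm, frobNorm_eq_norm, frobNorm_eq_norm]
  exact Matrix.frobenius_norm_mul A B

end frob

noncomputable def toEuc {dout din : ℕ} (A : Matrix (Fin dout) (Fin din) ℝ) :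
    EuclideanSpace ℝ (Fin dout × Fin din) := WithLp.toLp 2 (fun p : Fin dout × Fin din => A p.1 p.2)

noncomputable def toMat {dout din : ℕ} (x : EuclideanSpace ℝ (Fin dout × Fin din)) :
    Matrix (Fin dout) (Fin din) ℝ := Matrix.of fun i j => x (i, j)

lemma frobNorm_eq_euc {dout din : ℕ} (A : Matrix (Fin dout) (Fin din) ℝ) :
    frobNorm A = ‖toEuc A‖ := by
  rw [EuclideanSpace.norm_eq, frobNorm]
  congr 1
  rw [Fintype.sum_prod_type]
  refine Finset.sum_congr rfl fun i _ => Finset.sum_congr rfl fun j _ => ?_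
  rw [Real.norm_eq_abs, sq_abs]
  rfl

lemma toEuc_sub {dout din : ℕ} (A B : Matrix (Fin dout) (Fin din) ℝ) :
    toEuc (A - B) = toEuc A - toEuc B := by ext; simp [toEuc]

/-- Covering number bound for a fully connected layer `A ↦ AZ` with
`‖A‖_F ≤ a`: for every ε > 0 there is a cover of size at most
`(1 + 2a‖Z‖_F/ε)^(d_in·d_out)`. -/
theorem covering_number_fc_layer (din dout n : ℕ)
    (Z : Matrix (Fin din) (Fin n) ℝ) (a : ℝ) (ha : 0 < a) :
    ∀ ε > (0 : ℝ), ∃ U : Finset (Matrix (Fin dout) (Fin n) ℝ),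
      (U.card : ℝ) ≤ (1 + 2 * a * frobNorm Z / ε) ^ (din * dout) ∧
      ∀ A : Matrix (Fin dout) (Fin din) ℝ, frobNorm A ≤ a →
        ∃ u ∈ U, frobNorm (A * Z - u) ≤ ε := by
  intro ε hε
  classical
  have hZ0 : 0 ≤ frobNorm Z := frobNorm_nonneg Z
  have hbase : (1:ℝ) ≤ 1 + 2 * a * frobNorm Z / ε := by
    have : 0 ≤ 2 * a * frobNorm Z / ε := by positivity
    linarith
  rcases eq_or_lt_of_le hZ0 with hZ | hZ
  · refine ⟨{0}, ?_, fun A hA => ⟨0, Finset.mem_singleton_self 0, ?_⟩⟩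
    · simpa using one_le_pow₀ hbase
    · have h1 : frobNorm (A * Z) ≤ frobNorm A * frobNorm Z := frobNorm_mul_le A Z
      rw [← hZ] at h1
      rw [sub_zero]
      nlinarith [frobNorm_nonneg (A * Z), frobNorm_nonneg A]
  · set δ : ℝ := ε / frobNorm Z with hδdef
    have hδ : 0 < δ := div_pos hε hZ
    obtain ⟨S, hcard, hcover⟩ := exists_net (ι := Fin dout × Fin din) a δ ha.le hδ
    refine ⟨S.image (fun s => toMat s * Z), ?_, fun A hA => ?_⟩
    · calc ((S.image (fun s => toMat s * Z)).card : ℝ) ≤ (S.card : ℝ) := by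
            exact_mod_cast Finset.card_image_le
        _ ≤ (1 + 2 * a / δ) ^ (Fintype.card (Fin dout × Fin din)) := hcard
        _ = (1 + 2 * a * frobNorm Z / ε) ^ (din * dout) := by
            rw [Fintype.card_prod, Fintype.card_fin, Fintype.card_fin, Nat.mul_comm]
            congr 1
            rw [hδdef]
            field_simp
    · have hxball : toEuc A ∈ closedBall (0 : EuclideanSpace ℝ (Fin dout × Fin din)) a := by
        rw [mem_closedBall, dist_zero_right, ← frobNorm_eq_euc]
        exact hA
      obtain ⟨s, hsS, hdist⟩ := hcover (toEuc A) hxball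
      refine ⟨toMat s * Z, Finset.mem_image_of_mem _ hsS, ?_⟩
      have h1 : A * Z - toMat s * Z = (A - toMat s) * Z := (Matrix.sub_mul A (toMat s) Z).symm
      rw [h1]
      have h2 : frobNorm ((A - toMat s) * Z) ≤ frobNorm (A - toMat s) * frobNorm Z :=
        frobNorm_mul_le _ _
      have h3 : frobNorm (A - toMat s) ≤ δ := by
        rw [frobNorm_eq_euc, toEuc_sub, show toEuc (toMat s) = s from rfl, ← dist_eq_norm]
        exact hdist
      calc frobNorm ((A - toMat s) * Z) ≤ frobNorm (A - toMat s) * frobNorm Z := h2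
        _ ≤ δ * frobNorm Z := by nlinarith [frobNorm_nonneg (A - toMat s)]
        _ = ε := div_mul_cancel₀ ε hZ.ne'
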